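/- Let γ : I → ℝ^d be C^d on a compact interval I, and for a permutation σ ∈ S_d and 1 ≤ j ≤ d let L_{σ,j}(t) be the determinant of the j×j matrix whose (i,l) entry is γ_{σ(i)}^{(l)}(t). Then for every t ∈ I there exists a permutation σ such that for all 1 ≤ j ≤ d, |L_{σ,j}(t)| ≥ (j!/(d! · M^{d-j})) · |L_d(t)|, where M = max over I and over 1 ≤ i ≤ d of the sup norms of the derivatives γ^{(i)} (i.e., M = ‖γ‖_{C^d}). -/

import Mathlib

private def finSubEquiv {n d : ℕ} (h : n ≤ d) :
    Fin n ≃ {x : Fin d // (x : ℕ) < n} where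
  toFun l := ⟨Fin.castLE h l, l.isLt⟩
  invFun x := ⟨(x : Fin d).val, x.2⟩
  left_inv l := rfl
  right_inv x := rfl

private lemma key (d : ℕ) (A : Fin d → ℕ → ℝ) (M : ℝ)
    (hA : ∀ r : Fin d, ∀ n, n ≤ d → |A r n| ≤ M) (Ld : ℝ)
    (hLd : Ld = |(Matrix.of fun i l : Fin d => A i ((l : ℕ) + 1)).det|) :
    ∀ p j, 1 ≤ j → j + p = d → ∃ σ : Equiv.Perm (Fin d),
      ∀ k (hk : k ≤ d), j ≤ k →
        (k.factorial : ℝ) / (d.factorial * M ^ (d - k)) * Ld ≤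
          |(Matrix.of fun i l : Fin k => A (σ (Fin.castLE hk i)) ((l : ℕ) + 1)).det| := by
  intro p
  induction p with
  | zero =>
    intro j hj1 hjd
    refine ⟨1, ?_⟩
    intro k hk hdk
    have hkd : k = d := by omega
    subst hkd
    have h1 : ∀ i : Fin k, (1 : Equiv.Perm (Fin k)) (Fin.castLE hk i) = i := by
      intro i; exact Fin.ext rfl
    simp only [h1, Nat.sub_self, pow_zero, mul_one]
    rw [div_self (by positivity : (k.factorial : ℝ) ≠ 0), one_mul, hLd]
  | succ p ih =>
    intro j hj1 hjpd
    have hj1d : j + 1 ≤ d := by omega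
    obtain ⟨σ, hσ⟩ := ih (j + 1) (by omega) (by omega)
    have hM0 : 0 ≤ M := (abs_nonneg _).trans (hA ⟨0, by omega⟩ 0 (by omega))
    rcases eq_or_lt_of_le hM0 with hM | hM
    · refine ⟨σ, ?_⟩
      intro k hk hjk
      rcases eq_or_lt_of_le hjk with hkj | hkj
      · rw [← hM, zero_pow (by omega : d - k ≠ 0), mul_zero, div_zero, zero_mul]
        exact abs_nonneg _
      · exact hσ k hk (by omega)
    · set B : Matrix (Fin (j + 1)) (Fin (j + 1)) ℝ :=
        Matrix.of fun i l => A (σ (Fin.castLE hj1d i)) ((l : ℕ) + 1) with hB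
      obtain ⟨i₀, -, hmax⟩ := Finset.exists_max_image Finset.univ
        (fun i : Fin (j + 1) => |(B.submatrix i.succAbove (Fin.last j).succAbove).det|)
        ⟨0, Finset.mem_univ 0⟩
      set s := |(B.submatrix i₀.succAbove (Fin.last j).succAbove).det| with hs
      have hs0 : 0 ≤ s := abs_nonneg _
      have hexp : |B.det| ≤ (j + 1 : ℝ) * (M * s) := by
        rw [Matrix.det_succ_column B (Fin.last j)]
        refine (Finset.abs_sum_le_sum_abs _ _).trans ?_
        have hterm : ∀ i : Fin (j + 1),
            |(-1 : ℝ) ^ ((i : ℕ) + (Fin.last j : ℕ)) * B i (Fin.last j) *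
              (B.submatrix i.succAbove (Fin.last j).succAbove).det| ≤ M * s := by
          intro i
          rw [abs_mul, abs_mul, abs_pow, abs_neg, abs_one, one_pow, one_mul]
          have h1 : |B i (Fin.last j)| ≤ M := by
            have he : B i (Fin.last j) = A (σ (Fin.castLE hj1d i)) (j + 1) := rfl
            rw [he]; exact hA _ _ (by omega)
          exact mul_le_mul h1 (hmax i (Finset.mem_univ i)) (abs_nonneg _)
            ((abs_nonneg _).trans h1)
        calc ∑ i : Fin (j + 1), |(-1 : ℝ) ^ ((i : ℕ) + (Fin.last j : ℕ)) * B i (Fin.last j) *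
              (B.submatrix i.succAbove (Fin.last j).succAbove).det|
            ≤ ∑ _i : Fin (j + 1), M * s := Finset.sum_le_sum fun i _ => hterm i
          _ = (j + 1 : ℝ) * (M * s) := by
              rw [Finset.sum_const, Finset.card_univ, Fintype.card_fin, nsmul_eq_mul]
              push_cast; ring
      set π1 : Equiv.Perm (Fin (j + 1)) := (Fin.cycleRange i₀)⁻¹ * finRotate (j + 1) with hπ1
      set π : Equiv.Perm (Fin d) := π1.extendDomain (finSubEquiv hj1d) with hπ
      have hπ_lt : ∀ l : Fin (j + 1), π (Fin.castLE hj1d l) = Fin.castLE hj1d (π1 l) := by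
        intro l
        exact π1.extendDomain_apply_image (finSubEquiv hj1d) l
      have hπ_ge : ∀ x : Fin d, ¬((x : ℕ) < j + 1) → π x = x := fun x hx =>
        π1.extendDomain_apply_not_subtype (finSubEquiv hj1d) hx
      refine ⟨σ * π, ?_⟩
      intro k hk hjk
      rcases eq_or_lt_of_le hjk with hkj | hkj
      · -- k = j case
        subst hkj
        have hmat : (Matrix.of fun i l : Fin j => A ((σ * π) (Fin.castLE hk i)) ((l : ℕ) + 1))
            = B.submatrix i₀.succAbove (Fin.last j).succAbove := by
          ext i l
          simp only [Matrix.of_apply, Matrix.submatrix_apply, Equiv.Perm.mul_apply, hB]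
          have e1 : Fin.castLE hk i = Fin.castLE hj1d (Fin.castSucc i) := Fin.ext rfl
          have e2 : π1 (Fin.castSucc i) = i₀.succAbove i := by
            rw [hπ1, Equiv.Perm.mul_apply, finRotate_succ_apply, Fin.coeSucc_eq_succ]
            rw [Equiv.Perm.inv_def, Fin.cycleRange_symm_succ]
          rw [e1, hπ_lt, e2, Fin.succAbove_last]
          simp
        rw [hmat]
        -- arithmetic
        have h1 := hσ (j + 1) hj1d le_rfl
        have hBdet : |(Matrix.of fun i l : Fin (j + 1) =>
            A (σ (Fin.castLE hj1d i)) ((l : ℕ) + 1)).det| = |B.det| := rfl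
        rw [hBdet] at h1
        have hLd0 : 0 ≤ Ld := hLd ▸ abs_nonneg _
        have hd1 : d - j = (d - (j + 1)) + 1 := by omega
        have hfac : ((j + 1).factorial : ℝ) = (j + 1) * j.factorial := by
          rw [Nat.factorial_succ]; push_cast; ring
        have h2 : (j.factorial : ℝ) / (d.factorial * M ^ (d - (j + 1))) * Ld ≤ M * s := by
          have hk1pos : (0 : ℝ) < (j + 1 : ℝ) := by positivity
          rw [← mul_le_mul_iff_right₀ hk1pos]
          calc (j + 1 : ℝ) * ((j.factorial : ℝ) / (d.factorial * M ^ (d - (j + 1))) * Ld)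
              = ((j + 1).factorial : ℝ) / (d.factorial * M ^ (d - (j + 1))) * Ld := by
                rw [hfac]; ring
            _ ≤ |B.det| := h1
            _ ≤ (j + 1 : ℝ) * (M * s) := hexp
        rw [hd1, pow_succ]
        have hMe : (0 : ℝ) < M ^ (d - (j + 1)) := by positivity
        have hdf : (0 : ℝ) < (d.factorial : ℝ) := by positivity
        calc (j.factorial : ℝ) / (d.factorial * (M ^ (d - (j + 1)) * M)) * Ld
            = ((j.factorial : ℝ) / (d.factorial * M ^ (d - (j + 1))) * Ld) / M := by
              rw [← mul_assoc, ← div_div, div_mul_eq_mul_div]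
          _ ≤ s := by rw [div_le_iff₀ hM]; linarith
      · -- k ≥ j + 1 case
        have hk1 : j + 1 ≤ k := hkj
        have hval : ∀ i : Fin k, ((π (Fin.castLE hk i)) : ℕ) < k := by
          intro i
          by_cases h : (i : ℕ) < j + 1
          · have e1 : Fin.castLE hk i = Fin.castLE hj1d ⟨(i : ℕ), h⟩ := Fin.ext rfl
            rw [e1, hπ_lt]
            exact lt_of_lt_of_le (π1 ⟨(i : ℕ), h⟩).isLt hk1
          · rw [hπ_ge _ (by simpa using h)]
            exact i.isLt
        have hginj : Function.Injective (fun i : Fin k => (⟨_, hval i⟩ : Fin k)) := by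
          intro i i' hii
          have : π (Fin.castLE hk i) = π (Fin.castLE hk i') :=
            Fin.ext (congrArg Fin.val hii : _)
          exact Fin.castLE_injective hk (π.injective this)
        set τ : Equiv.Perm (Fin k) :=
          Equiv.ofBijective _ (Finite.injective_iff_bijective.mp hginj) with hτdef
        have hτ : ∀ i : Fin k, Fin.castLE hk (τ i) = π (Fin.castLE hk i) := fun i =>
          Fin.ext rfl
        have hmat : (Matrix.of fun i l : Fin k => A ((σ * π) (Fin.castLE hk i)) ((l : ℕ) + 1))
            = (Matrix.of fun i l : Fin k =>
                A (σ (Fin.castLE hk i)) ((l : ℕ) + 1)).submatrix τ id := by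
          ext i l
          simp only [Matrix.of_apply, Matrix.submatrix_apply, Equiv.Perm.mul_apply, id]
          rw [← hτ]
        rw [hmat, Matrix.det_permute, abs_mul]
        have hsgn : |((Equiv.Perm.sign τ : ℤ) : ℝ)| = 1 := by
          rcases Int.units_eq_one_or (Equiv.Perm.sign τ) with h | h <;> rw [h] <;> norm_num
        rw [hsgn, one_mul]
        exact hσ k hk hk1


/-- The minor `L_{σ,j}(t)`: determinant of the `j × j` matrix whose `(i, l)` entry is the
`(l+1)`-st derivative of the `σ(i)`-th coordinate of `γ` at `t`. -/
noncomputable def minorL (d : ℕ) (γ : Fin d → ℝ → ℝ) (σ : Equiv.Perm (Fin d))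
    (j : ℕ) (hj : j ≤ d) (t : ℝ) : ℝ :=
  Matrix.det (Matrix.of fun i l : Fin j =>
    iteratedDeriv ((l : ℕ) + 1) (γ (σ (Fin.castLE hj i))) t)

/-- For every `t` there is a permutation `σ` such that
`|L_{σ,j}(t)| ≥ (j!/(d!·M^{d-j}))·|L_d(t)|` for all `1 ≤ j ≤ d`. -/
theorem statement2 (d : ℕ) (hd : 1 ≤ d) (a b : ℝ) (hab : a ≤ b)
    (γ : Fin d → ℝ → ℝ) (hγ : ∀ c, ContDiff ℝ d (γ c))
    (M : ℝ)
    (hM : ∀ t ∈ Set.Icc a b, ∀ c : Fin d, ∀ i ≤ d, |iteratedDeriv i (γ c) t| ≤ M)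
    (t : ℝ) (ht : t ∈ Set.Icc a b) :
    ∃ σ : Equiv.Perm (Fin d), ∀ (j : ℕ) (hj : j ≤ d), 1 ≤ j →
      (j.factorial : ℝ) / (d.factorial * M ^ (d - j)) * |minorL d γ 1 d le_rfl t| ≤
        |minorL d γ σ j hj t| := by
  have hAb : ∀ r : Fin d, ∀ n, n ≤ d →
      |(fun (r : Fin d) (n : ℕ) => iteratedDeriv n (γ r) t) r n| ≤ M :=
    fun r n hn => hM t ht r n hn
  have hLd : |minorL d γ 1 d le_rfl t| =
      |(Matrix.of fun i l : Fin d =>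
        (fun (r : Fin d) (n : ℕ) => iteratedDeriv n (γ r) t) i ((l : ℕ) + 1)).det| := by
    rfl
  obtain ⟨σ, hσ⟩ := key d (fun (r : Fin d) (n : ℕ) => iteratedDeriv n (γ r) t) M hAb
    _ hLd (d - 1) 1 le_rfl (by omega)
  exact ⟨σ, fun j hj hj1 => hσ j hj hj1⟩
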